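/- Let t be a k-ary tree, L a 0-homogeneous tree language, b ∈ Σ₀, and α a symbol of arity ≥ 1 (or α ∈ Σ₀ with α ≠ b). Then α⁻¹(t ·_b L) = α⁻¹(t) ·_b L when α has arity ≥ 1, and α⁻¹(t ·_b L) = α⁻¹(t) ·_b L ∪ (b⁻¹(t) ·_b L) ∘₁ α⁻¹(L) when α ∈ Σ₀ ∖ {b}. -/

import Mathlib

inductive GTree (S : Type) (ar : S → ℕ) : Type where
  | eps (x : ℕ) : GTree S ar
  | node (f : S) (ts : Fin (ar f) → GTree S ar) : GTree S ar

namespace GTree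

variable {S : Type} {ar : S → ℕ}

/-- Substitute each ε-symbol `ε_x` by `σ x`. -/
def subst (σ : ℕ → GTree S ar) : GTree S ar → GTree S ar
  | eps x => σ x
  | node f ts => node f (fun i => subst σ (ts i))

/-- The multiset of ε-indices of a tree. -/
def epsIdx : GTree S ar → Multiset ℕ
  | eps x => {x}
  | node _ ts => ∑ i, epsIdx (ts i)

/-- `Inc_ε(z,t)`: increment every ε-index by `z`. -/
def inc (z : ℕ) (t : GTree S ar) : GTree S ar :=
  subst (fun x => eps (x + z)) t

/-- Composition `t ∘ (t₁,…,t_k)`: graft `ts_j` at the `j`-th smallest ε-index of `t`. -/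
def compo (t : GTree S ar) (ts : List (GTree S ar)) : GTree S ar :=
  subst (fun x => ts.getD ((Multiset.sort (epsIdx t) (· ≤ ·)).idxOf x) (eps x)) t

/-- The tree `α(ε₁,…,ε_k)` associated with a symbol `α`. -/
def symTree (f : S) : GTree S ar := node f (fun i => eps (i.1 + 1))

/-- Bottom-up quotient `d⁻¹(t)` of a tree `t` w.r.t. a tree `d`. -/
def quotT (d t : GTree S ar) : Set (GTree S ar) :=
  { u | epsIdx u = 1 ::ₘ (epsIdx t - epsIdx d).map (· + 1) ∧
        subst (fun j => if j = 1 then d else eps (j - 1)) u = t }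

/-- Bottom-up quotient `d⁻¹(L)` of a language w.r.t. a tree. -/
def quotL (d : GTree S ar) (L : Set (GTree S ar)) : Set (GTree S ar) :=
  ⋃ t ∈ L, quotT d t

def incL (z : ℕ) (L : Set (GTree S ar)) : Set (GTree S ar) := inc z '' L

/-- Composition of languages `L ∘ (L₁,…,L_k)`. -/
def compoL (L : Set (GTree S ar)) (Ls : List (Set (GTree S ar))) : Set (GTree S ar) :=
  { u | ∃ t ∈ L, ∃ ts : List (GTree S ar), List.Forall₂ (· ∈ ·) ts Ls ∧ u = compo t ts }

/-- Partial composition `t ∘₁ L'` at the first (smallest) ε-index. -/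
def pcomp (t : GTree S ar) (L' : Set (GTree S ar)) : Set (GTree S ar) :=
  { u | ∃ t' ∈ L', u = compo t (t' :: ((Multiset.sort (epsIdx t) (· ≤ ·)).tail).map eps) }

/-- Partial composition of languages `L ∘₁ L'`. -/
def pcompL (L L' : Set (GTree S ar)) : Set (GTree S ar) := ⋃ t ∈ L, pcomp t L'

/-- Tree substitution `t_{b ← L}` of the 0-ary symbol `b` by the language `L`. -/
def bsub [DecidableEq S] (b : S) (L : Set (GTree S ar)) : GTree S ar → Set (GTree S ar)
  | eps x => {eps x}
  | node f ts =>
      if f = b then L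
      else { u | ∃ us : Fin (ar f) → GTree S ar, (∀ i, us i ∈ bsub b L (ts i)) ∧ u = node f us }

/-- `b`-product `L₁ ·_b L₂`. -/
def prodB [DecidableEq S] (L₁ : Set (GTree S ar)) (b : S) (L₂ : Set (GTree S ar)) :
    Set (GTree S ar) :=
  ⋃ t ∈ L₁, bsub b L₂ t

/-- Iterated `b`-product `L^{n_b}`. -/
def iterB [DecidableEq S] (b : S) (L : Set (GTree S ar)) : ℕ → Set (GTree S ar)
  | 0 => {symTree b}
  | n + 1 => iterB b L n ∪ prodB L b (iterB b L n)

/-- `b`-closure `L^{*_b}`. -/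
def closB [DecidableEq S] (b : S) (L : Set (GTree S ar)) : Set (GTree S ar) :=
  ⋃ n, iterB b L n

/-- Iterated composition `L^{n∘}` of a 1-homogeneous language of ε-index `{x}`. -/
def iterC (x : ℕ) (L : Set (GTree S ar)) : ℕ → Set (GTree S ar)
  | 0 => {eps x}
  | n + 1 => iterC x L n ∪ pcompL (iterC x L n) L

/-- Composition closure `L^⊛`. -/
def closC (x : ℕ) (L : Set (GTree S ar)) : Set (GTree S ar) := ⋃ n, iterC x L n

end GTree

namespace GTree

variable {S : Type} {ar : S → ℕ}

lemma epsIdx_eps (x : ℕ) : epsIdx (eps x : GTree S ar) = {x} := rfl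
lemma epsIdx_node (f : S) (ts : Fin (ar f) → GTree S ar) :
    epsIdx (node f ts) = ∑ i, epsIdx (ts i) := rfl
lemma subst_node (σ : ℕ → GTree S ar) (f : S) (ts) :
    subst σ (node f ts) = node f (fun i => subst σ (ts i)) := rfl

lemma bind_sum {ι : Type*} (s : Finset ι) (m : ι → Multiset ℕ) (g : ℕ → Multiset ℕ) :
    (∑ i ∈ s, m i).bind g = ∑ i ∈ s, (m i).bind g := by
  classical
  induction s using Finset.induction with
  | empty => simp
  | insert hj ih => simp_all [Multiset.add_bind]

lemma filter_sum {ι : Type*} (s : Finset ι) (m : ι → Multiset ℕ) (p : ℕ → Prop)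
    [DecidablePred p] :
    (∑ i ∈ s, m i).filter p = ∑ i ∈ s, (m i).filter p := by
  classical
  induction s using Finset.induction with
  | empty => simp
  | insert hj ih => simp_all [Multiset.filter_add]

lemma epsIdx_subst (σ : ℕ → GTree S ar) (t : GTree S ar) :
    epsIdx (subst σ t) = (epsIdx t).bind (fun x => epsIdx (σ x)) := by
  induction t with
  | eps x => simp [subst, epsIdx]
  | node f ts ih =>
      rw [subst_node, epsIdx_node, epsIdx_node, bind_sum]
      exact Finset.sum_congr rfl fun i _ => ih i

lemma subst_congr {σ σ' : ℕ → GTree S ar} (t : GTree S ar)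
    (h : ∀ x ∈ epsIdx t, σ x = σ' x) : subst σ t = subst σ' t := by
  induction t with
  | eps x => exact h x (by simp [epsIdx])
  | node f ts ih =>
      rw [subst_node, subst_node]
      congr 1; funext i
      exact ih i fun x hx => h x (by
        rw [epsIdx_node]
        exact Multiset.mem_sum.mpr ⟨i, Finset.mem_univ i, hx⟩)

lemma subst_eps (t : GTree S ar) : subst eps t = t := by
  induction t with
  | eps x => rfl
  | node f ts ih => rw [subst_node]; congr 1; funext i; exact ih i

lemma subst_eps_of {σ : ℕ → GTree S ar} (t : GTree S ar)
    (h : ∀ x ∈ epsIdx t, σ x = eps x) : subst σ t = t := by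
  rw [subst_congr t h, subst_eps]

lemma subst_of_epsIdx_zero {σ : ℕ → GTree S ar} {t : GTree S ar}
    (h : epsIdx t = 0) : subst σ t = t :=
  subst_eps_of t (by simp [h])

lemma subst_subst (σ σ' : ℕ → GTree S ar) (t : GTree S ar) :
    subst σ (subst σ' t) = subst (fun x => subst σ (σ' x)) t := by
  induction t with
  | eps x => rfl
  | node f ts ih =>
      rw [subst_node, subst_node, subst_node]
      congr 1; funext i; exact ih i

lemma epsIdx_node_zero {f : S} (h : ar f = 0) (ts : Fin (ar f) → GTree S ar) :
    epsIdx (node f ts) = 0 := by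
  rw [epsIdx_node]
  haveI : IsEmpty (Fin (ar f)) := by rw [h]; infer_instance
  simp


section BsubLemmas
variable [DecidableEq S] {b : S} {L : Set (GTree S ar)}

lemma bsub_eps (b : S) (L : Set (GTree S ar)) (x : ℕ) :
    bsub b L (eps x) = {eps x} := rfl

lemma bsub_node_b {f : S} (hf : f = b) (ts : Fin (ar f) → GTree S ar) :
    bsub b L (node f ts) = L := by simp [bsub, hf]

lemma bsub_node_ne {f : S} (hf : f ≠ b) (ts : Fin (ar f) → GTree S ar) :
    bsub b L (node f ts) =
      { u | ∃ us : Fin (ar f) → GTree S ar,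
          (∀ i, us i ∈ bsub b L (ts i)) ∧ u = node f us } := by
  simp [bsub, hf]

lemma epsIdx_bsub (hb : ar b = 0) (hL : ∀ u ∈ L, epsIdx u = 0) :
    ∀ t s : GTree S ar, s ∈ bsub b L t → epsIdx s = epsIdx t := by
  intro t
  induction t with
  | eps x => intro s hs; rw [bsub_eps] at hs; rw [hs]
  | node f ts ih =>
      intro s hs
      by_cases hf : f = b
      · rw [bsub_node_b hf] at hs
        rw [hL s hs, epsIdx_node_zero (hf ▸ hb)]
      · rw [bsub_node_ne hf] at hs
        obtain ⟨us, hus, rfl⟩ := hs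
        rw [epsIdx_node, epsIdx_node]
        exact Finset.sum_congr rfl fun i _ => ih i _ (hus i)

lemma eps_mem_bsub (hL : ∀ u ∈ L, epsIdx u = 0) {y : ℕ} {t : GTree S ar}
    (h : eps y ∈ bsub b L t) : t = eps y := by
  cases t with
  | eps x => rw [bsub_eps] at h; exact (Set.mem_singleton_iff.mp h).symm
  | node f ts =>
      by_cases hf : f = b
      · rw [bsub_node_b hf] at h
        have := hL _ h
        simp [epsIdx_eps] at this
      · rw [bsub_node_ne hf] at h
        obtain ⟨us, -, h⟩ := h
        exact absurd h (by intro h; cases h)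

lemma mem_bsub_self {α : S} (hαb : α ≠ b) :
    symTree (ar := ar) α ∈ bsub b L (symTree α) := by
  rw [symTree, bsub_node_ne hαb]
  exact ⟨fun i => eps (i.1 + 1), fun i => rfl, rfl⟩

lemma bsub_subst (hL : ∀ u ∈ L, epsIdx u = 0) {σ σ' : ℕ → GTree S ar}
    (hσ : ∀ x, σ' x ∈ bsub b L (σ x)) :
    ∀ v w : GTree S ar, w ∈ bsub b L v → subst σ' w ∈ bsub b L (subst σ v) := by
  intro v
  induction v with
  | eps x =>
      intro w hw
      rw [bsub_eps] at hw
      rw [hw]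
      exact hσ x
  | node f ts ih =>
      intro w hw
      by_cases hf : f = b
      · rw [bsub_node_b hf] at hw
        rw [subst_of_epsIdx_zero (hL w hw), subst_node, bsub_node_b hf]
        exact hw
      · rw [bsub_node_ne hf] at hw
        obtain ⟨us, hus, rfl⟩ := hw
        rw [subst_node, subst_node, bsub_node_ne hf]
        exact ⟨fun i => subst σ' (us i), fun i => ih i _ (hus i), rfl⟩

end BsubLemmas


lemma bind_split (m : Multiset ℕ) (g : ℕ → Multiset ℕ) (f : ℕ → ℕ)
    (h : ∀ x, x ≠ 1 → g x = {f x}) :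
    m.bind g = (m.filter (· ≠ 1)).map f + (m.count 1) • g 1 := by
  induction m using Multiset.induction with
  | empty => simp
  | cons a m ih =>
      rw [Multiset.cons_bind, ih]
      by_cases ha : a = 1
      · subst ha
        rw [Multiset.filter_cons_of_neg _ (by simp), Multiset.count_cons_self, succ_nsmul]
        rw [add_comm (g 1), add_assoc]
      · rw [Multiset.filter_cons_of_pos _ (by simpa using ha),
          Multiset.count_cons_of_ne (Ne.symm ha), h a ha, Multiset.map_cons,
          ← Multiset.singleton_add, ← add_assoc]

lemma epsIdx_symTree_zero {α : S} (h : ar α = 0) :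
    epsIdx (symTree (ar := ar) α) = 0 :=
  epsIdx_node_zero h _

lemma one_mem_epsIdx_symTree {α : S} (h : 1 ≤ ar α) :
    (1 : ℕ) ∈ epsIdx (symTree (ar := ar) α) := by
  rw [symTree, epsIdx_node]
  exact Multiset.mem_sum.mpr ⟨⟨0, h⟩, Finset.mem_univ _, by simp [epsIdx_eps]⟩

lemma count_zero_epsIdx_symTree (α : S) :
    Multiset.count 0 (epsIdx (symTree (ar := ar) α)) = 0 := by
  rw [symTree, epsIdx_node, Multiset.count_sum']
  exact Finset.sum_eq_zero fun i _ => by simp [epsIdx_eps]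

/-- epsIdx of a quotient-style substitution. -/
lemma epsIdx_subst_tau (d : GTree S ar) (u : GTree S ar) :
    epsIdx (subst (fun j => if j = 1 then d else eps (j - 1)) u) =
      ((epsIdx u).filter (· ≠ 1)).map (· - 1) +
        (Multiset.count 1 (epsIdx u)) • epsIdx d := by
  rw [epsIdx_subst, bind_split _ _ (· - 1) (fun x hx => by simp [hx, epsIdx_eps])]
  simp

/-- epsIdx of a first-slot composition-style substitution. -/
lemma epsIdx_subst_sigma (d : GTree S ar) (u : GTree S ar) :
    epsIdx (subst (fun j => if j = 1 then d else eps j) u) =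
      (epsIdx u).filter (· ≠ 1) + (Multiset.count 1 (epsIdx u)) • epsIdx d := by
  rw [epsIdx_subst, bind_split _ _ id (fun x hx => by simp [hx, epsIdx_eps])]
  simp

lemma filter_decomp (m : Multiset ℕ) :
    m = Multiset.replicate (m.count 1) 1 + m.filter (· ≠ 1) := by
  rw [← Multiset.filter_eq' m 1]
  simp only [ne_eq]
  exact (Multiset.filter_add_not _ m).symm


section Quot
variable [DecidableEq S] {b α : S} {L : Set (GTree S ar)}

lemma lemC (hb : ar b = 0) (hL : ∀ u ∈ L, epsIdx u = 0) (hαb : α ≠ b) :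
    ∀ t s u : GTree S ar, s ∈ bsub b L t →
      subst (fun j => if j = 1 then symTree α else eps (j - 1)) u = s →
      (1 ≤ ar α ∨ Multiset.count 1 (epsIdx u) = 0) →
      ∃ v, subst (fun j => if j = 1 then symTree α else eps (j - 1)) v = t ∧
        u ∈ bsub b L v ∧ epsIdx v = epsIdx u := by
  intro t
  induction t with
  | eps x =>
      intro s u hs hsub _
      rw [bsub_eps, Set.mem_singleton_iff] at hs
      subst hs
      cases u with
      | node g us => rw [subst_node] at hsub; cases hsub
      | eps y =>
          simp only [subst] at hsub
          by_cases hy : y = 1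
          · rw [if_pos hy, symTree] at hsub; cases hsub
          · refine ⟨eps y, ?_, ?_, rfl⟩
            · simp only [subst]; rw [if_neg hy]; rw [if_neg hy] at hsub; exact hsub
            · rw [bsub_eps]; exact Set.mem_singleton _
  | node f ts ih =>
      intro s u hs hsub hor
      by_cases hf : f = b
      · rw [bsub_node_b hf] at hs
        have hs0 : epsIdx s = 0 := hL s hs
        have hle : ((epsIdx u).filter (· ≠ 1)).map (· - 1) +
            (Multiset.count 1 (epsIdx u)) • epsIdx (symTree (ar := ar) α) = 0 := by
          rw [← epsIdx_subst_tau, hsub, hs0]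
        have hA : ((epsIdx u).filter (· ≠ 1)).map (· - 1) = 0 :=
          Multiset.le_zero.mp (hle ▸ le_add_right le_rfl)
        have hB : (Multiset.count 1 (epsIdx u)) • epsIdx (symTree (ar := ar) α) = 0 :=
          Multiset.le_zero.mp (hle ▸ le_add_left le_rfl)
        have hc : Multiset.count 1 (epsIdx u) = 0 := by
          cases hor with
          | inr h => exact h
          | inl h =>
              have h1 : (1 : ℕ) ∈ epsIdx (symTree (ar := ar) α) := one_mem_epsIdx_symTree h
              have := congrArg (Multiset.count 1) hB
              rw [Multiset.count_nsmul, Multiset.count_zero] at this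
              have hpos : 0 < Multiset.count 1 (epsIdx (symTree (ar := ar) α)) :=
                Multiset.count_pos.mpr h1
              exact (Nat.mul_eq_zero.mp this).resolve_right (by omega)
        have h0 : epsIdx u = 0 := by
          have hfil : (epsIdx u).filter (· ≠ 1) = 0 := by
            have := congrArg Multiset.card hA
            rw [Multiset.card_map, Multiset.card_zero] at this
            exact Multiset.card_eq_zero.mp this
          rw [filter_decomp (epsIdx u), hc, hfil]; rfl
        have hus : u = s := by rw [← hsub, subst_of_epsIdx_zero h0]
        refine ⟨node f ts, ?_, ?_, ?_⟩
        · rw [subst_node]; congr 1; funext i; exact absurd i.isLt (by simp [hf ▸ hb])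
        · rw [bsub_node_b hf]; rw [hus]; exact hs
        · rw [epsIdx_node_zero (hf ▸ hb), h0]
      · rw [bsub_node_ne hf] at hs
        obtain ⟨ss, hss, rfl⟩ := hs
        cases u with
        | eps y =>
            simp only [subst] at hsub
            by_cases hy : y = 1
            · subst hy
              rw [if_pos rfl, symTree] at hsub
              injection hsub with h1 h2
              subst h1
              have h2' : (fun i : Fin (ar α) => (eps (i.1 + 1) : GTree S ar)) = ss :=
                eq_of_heq h2
              have hts : ∀ i, ts i = eps (i.1 + 1) := fun i =>
                eps_mem_bsub hL (h2' ▸ hss i)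
              refine ⟨eps 1, ?_, ?_, rfl⟩
              · show (if (1:ℕ) = 1 then symTree α else eps (1-1)) = node α ts
                rw [if_pos rfl, symTree]
                congr 1; funext i; exact (hts i).symm
              · rw [bsub_eps]; exact Set.mem_singleton _
            · rw [if_neg hy] at hsub; cases hsub
        | node g us =>
            rw [subst_node] at hsub
            injection hsub with h1 h2
            subst h1
            have h2' := eq_of_heq h2
            have hcomp : ∀ i, subst (fun j => if j = 1 then symTree α else eps (j - 1)) (us i) = ss i :=
              fun i => congrFun h2' i
            have hor' : ∀ i, 1 ≤ ar α ∨ Multiset.count 1 (epsIdx (us i)) = 0 := by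
              cases hor with
              | inl h => exact fun i => Or.inl h
              | inr h =>
                  intro i; right
                  have hsum : ∑ j, Multiset.count 1 (epsIdx (us j)) = 0 := by
                    rw [← Multiset.count_sum', ← epsIdx_node]; exact h
                  exact Finset.sum_eq_zero_iff.mp hsum i (Finset.mem_univ i)
            choose vfun hv1 hv2 hv3 using fun i => ih i (ss i) (us i) (hss i) (hcomp i) (hor' i)
            refine ⟨node g vfun, ?_, ?_, ?_⟩
            · rw [subst_node]; congr 1; funext i; exact hv1 i
            · rw [bsub_node_ne hf]; exact ⟨us, fun i => hv2 i, rfl⟩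
            · rw [epsIdx_node, epsIdx_node]; exact Finset.sum_congr rfl fun i _ => hv3 i

lemma lemC2 (hb : ar b = 0) (hL : ∀ u ∈ L, epsIdx u = 0) (hαb : α ≠ b) :
    ∀ t s u : GTree S ar, s ∈ bsub b L t →
      subst (fun j => if j = 1 then symTree α else eps (j - 1)) u = s →
      Multiset.count 1 (epsIdx u) = 1 →
      (∃ v, subst (fun j => if j = 1 then symTree α else eps (j - 1)) v = t ∧ u ∈ bsub b L v ∧ epsIdx v = epsIdx u) ∨
      (∃ v w u' l, subst (fun j => if j = 1 then symTree b else eps (j - 1)) v = t ∧ w ∈ bsub b L v ∧ l ∈ L ∧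
        subst (fun j => if j = 1 then symTree α else eps (j - 1)) u' = l ∧
        u = subst (fun x => if x = 1 then u' else eps x) w ∧
        Multiset.count 1 (epsIdx v) = 1 ∧ epsIdx w = epsIdx v ∧
        epsIdx u = epsIdx u' + (epsIdx v).filter (· ≠ 1)) := by
  intro t
  induction t with
  | eps x =>
      intro s u hs hsub hcnt
      rw [bsub_eps, Set.mem_singleton_iff] at hs; subst hs
      cases u with
      | node g us => rw [subst_node] at hsub; cases hsub
      | eps y =>
          have hy : y = 1 := by
            rw [epsIdx_eps, Multiset.count_singleton] at hcnt
            by_contra hne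
            rw [if_neg (Ne.symm hne)] at hcnt
            omega
          subst hy
          have : (if (1:ℕ) = 1 then symTree α else eps (1-1)) = eps x := hsub
          rw [if_pos rfl, symTree] at this; cases this
  | node f ts ih =>
      intro s u hs hsub hcnt
      by_cases hf : f = b
      · subst hf
        rw [bsub_node_b rfl] at hs
        right
        refine ⟨eps 1, eps 1, u, s, ?_, ?_, hs, hsub, ?_, ?_, rfl, ?_⟩
        · show (if (1:ℕ) = 1 then symTree f else eps (1-1)) = node f ts
          rw [if_pos rfl, symTree]
          congr 1; funext i; exact absurd i.isLt (by simp [hb])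
        · rw [bsub_eps]; exact Set.mem_singleton _
        · show u = (if (1:ℕ) = 1 then u else eps 1)
          rw [if_pos rfl]
        · rw [epsIdx_eps, Multiset.count_singleton, if_pos rfl]
        · rw [epsIdx_eps]
          have hfil : ({1} : Multiset ℕ).filter (· ≠ 1) = 0 := by decide
          rw [hfil, add_zero]
      · rw [bsub_node_ne hf] at hs
        obtain ⟨ss, hss, rfl⟩ := hs
        cases u with
        | eps y =>
            have hy : y = 1 := by
              rw [epsIdx_eps, Multiset.count_singleton] at hcnt
              by_contra hne
              rw [if_neg (Ne.symm hne)] at hcnt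
              omega
            subst hy
            left
            have hsub' : symTree α = node f ss := by
              have h0 : (if (1:ℕ) = 1 then symTree α else eps (1-1)) = node f ss := hsub
              rwa [if_pos rfl] at h0
            rw [symTree] at hsub'
            injection hsub' with h1 h2
            subst h1
            have h2' := eq_of_heq h2
            have hts : ∀ i, ts i = eps (i.1 + 1) := fun i => eps_mem_bsub hL (h2' ▸ hss i)
            refine ⟨eps 1, ?_, ?_, rfl⟩
            · show (if (1:ℕ) = 1 then symTree α else eps (1-1)) = node α ts
              rw [if_pos rfl, symTree]; congr 1; funext i; exact (hts i).symm
            · rw [bsub_eps]; exact Set.mem_singleton _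
        | node g us =>
            rw [subst_node] at hsub
            injection hsub with h1 h2
            subst h1
            have h2' := eq_of_heq h2
            have hcomp : ∀ i, subst (fun j => if j = 1 then symTree α else eps (j - 1)) (us i) = ss i := fun i => congrFun h2' i
            have hcnt' : ∑ i, Multiset.count 1 (epsIdx (us i)) = 1 := by
              rw [← Multiset.count_sum', ← epsIdx_node]; exact hcnt
            have hex : ∃ j, Multiset.count 1 (epsIdx (us j)) ≠ 0 := by
              by_contra hno; push_neg at hno
              rw [Finset.sum_eq_zero (fun i _ => hno i)] at hcnt'; omega
            obtain ⟨j, hj⟩ := hex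
            have hj1 : Multiset.count 1 (epsIdx (us j)) = 1 := by
              have hle : Multiset.count 1 (epsIdx (us j)) ≤ 1 :=
                hcnt' ▸ Finset.single_le_sum
                  (f := fun i => Multiset.count 1 (epsIdx (us i)))
                  (fun i _ => Nat.zero_le _) (Finset.mem_univ j)
              omega
            have hothers : ∀ i, i ≠ j → Multiset.count 1 (epsIdx (us i)) = 0 := by
              intro i hij
              have hdec := Finset.sum_eq_sum_sdiff_singleton_add (Finset.mem_univ j)
                (fun i => Multiset.count 1 (epsIdx (us i)))
              rw [hcnt', hj1] at hdec
              have hz : ∑ i ∈ Finset.univ \ {j}, Multiset.count 1 (epsIdx (us i)) = 0 := by omega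
              exact Finset.sum_eq_zero_iff.mp hz i (by simp [hij])
            have hCother : ∀ i, i ≠ j →
                ∃ v, subst (fun j => if j = 1 then symTree α else eps (j - 1)) v = ts i ∧ us i ∈ bsub b L v ∧ epsIdx v = epsIdx (us i) :=
              fun i hij => lemC hb hL hαb (ts i) (ss i) (us i) (hss i) (hcomp i)
                (Or.inr (hothers i hij))
            choose vv hvv1 hvv2 hvv3 using hCother
            rcases ih j (ss j) (us j) (hss j) (hcomp j) hj1 with haj | hbj
            · obtain ⟨vj, hvj1, hvj2, hvj3⟩ := haj
              left
              refine ⟨node g (fun i => if h : i = j then vj else vv i h), ?_, ?_, ?_⟩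
              · rw [subst_node]; congr 1; funext i
                rcases eq_or_ne i j with rfl | hij
                · rw [dif_pos rfl]; exact hvj1
                · rw [dif_neg hij]; exact hvv1 i hij
              · rw [bsub_node_ne hf]
                refine ⟨us, fun i => ?_, rfl⟩
                rcases eq_or_ne i j with rfl | hij
                · rw [dif_pos rfl]; exact hvj2
                · rw [dif_neg hij]; exact hvv2 i hij
              · rw [epsIdx_node, epsIdx_node]
                refine Finset.sum_congr rfl fun i _ => ?_
                rcases eq_or_ne i j with rfl | hij
                · rw [dif_pos rfl]; exact hvj3
                · rw [dif_neg hij]; exact hvv3 i hij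
            · obtain ⟨vj, wj, u', l, hb1, hb2, hb3, hb4, hb5, hb6, hb7, hb8⟩ := hbj
              right
              refine ⟨node g (fun i => if h : i = j then vj else vv i h),
                node g (fun i => if h : i = j then wj else us i), u', l,
                ?_, ?_, hb3, hb4, ?_, ?_, ?_, ?_⟩
              · rw [subst_node]; congr 1; funext i
                rcases eq_or_ne i j with rfl | hij
                · rw [dif_pos rfl]; exact hb1
                · rw [dif_neg hij]
                  have hcgr : subst (fun j => if j = 1 then symTree b else eps (j - 1)) (vv i hij) = subst (fun j => if j = 1 then symTree α else eps (j - 1)) (vv i hij) := by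
                    refine subst_congr _ fun x hx => ?_
                    have hx1 : x ≠ 1 := by
                      intro hx1; subst hx1
                      have hz := hothers i hij
                      rw [← hvv3 i hij] at hz
                      exact Multiset.count_eq_zero.mp hz hx
                    rw [if_neg hx1, if_neg hx1]
                  rw [hcgr]; exact hvv1 i hij
              · rw [bsub_node_ne hf]
                refine ⟨fun i => if h : i = j then wj else us i, fun i => ?_, rfl⟩
                rcases eq_or_ne i j with rfl | hij
                · show (if h : i = i then wj else us i) ∈ bsub b L (if h : i = i then vj else vv i h)
                  rw [dif_pos rfl, dif_pos rfl]; exact hb2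
                · show (if h : i = j then wj else us i) ∈ bsub b L (if h : i = j then vj else vv i h)
                  rw [dif_neg hij, dif_neg hij]; exact hvv2 i hij
              · rw [subst_node]; congr 1; funext i
                rcases eq_or_ne i j with rfl | hij
                · rw [dif_pos rfl]; exact hb5
                · rw [dif_neg hij]
                  refine (subst_eps_of _ fun x hx => ?_).symm
                  have hx1 : x ≠ 1 := by
                    intro hx1; subst hx1
                    exact Multiset.count_eq_zero.mp (hothers i hij) hx
                  rw [if_neg hx1]
              · rw [epsIdx_node, Multiset.count_sum',
                  Finset.sum_eq_sum_sdiff_singleton_add (Finset.mem_univ j)]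
                have h0 : ∑ i ∈ Finset.univ \ {j},
                    Multiset.count 1 (epsIdx (if h : i = j then vj else vv i h)) = 0 :=
                  Finset.sum_eq_zero fun i hi => by
                    have hij : i ≠ j := by simpa using (Finset.mem_sdiff.mp hi).2
                    rw [dif_neg hij, hvv3 i hij]; exact hothers i hij
                rw [h0, dif_pos rfl, hb6]
              · rw [epsIdx_node, epsIdx_node]
                refine Finset.sum_congr rfl fun i _ => ?_
                rcases eq_or_ne i j with rfl | hij
                · rw [dif_pos rfl, dif_pos rfl]; exact hb7
                · rw [dif_neg hij, dif_neg hij]; exact (hvv3 i hij).symm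
              · have hdecu : epsIdx (node g us) =
                    ∑ i ∈ Finset.univ \ {j}, epsIdx (us i) + epsIdx (us j) := by
                  rw [epsIdx_node]
                  exact Finset.sum_eq_sum_sdiff_singleton_add (Finset.mem_univ j) _
                have hdecv : (epsIdx (node g (fun i => if h : i = j then vj else vv i h))).filter (· ≠ 1) =
                    ∑ i ∈ Finset.univ \ {j}, epsIdx (us i) + (epsIdx vj).filter (· ≠ 1) := by
                  rw [epsIdx_node, filter_sum,
                    Finset.sum_eq_sum_sdiff_singleton_add (Finset.mem_univ j)]
                  congr 1
                  · refine Finset.sum_congr rfl fun i hi => ?_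
                    have hij : i ≠ j := by simpa using (Finset.mem_sdiff.mp hi).2
                    rw [dif_neg hij, hvv3 i hij]
                    refine Multiset.filter_eq_self.mpr fun x hx => ?_
                    intro hx1; subst hx1
                    exact Multiset.count_eq_zero.mp (hothers i hij) hx
                  · rw [dif_pos rfl]
                rw [hdecu, hdecv, hb8]
                abel

lemma countH1 (m : Multiset ℕ) :
    Multiset.count 1 (m.map (· + 1)) = Multiset.count 0 m := by
  induction m using Multiset.induction with
  | empty => simp
  | cons a m ih =>
      rw [Multiset.map_cons, Multiset.count_cons, Multiset.count_cons, ih]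
      by_cases ha : a = 0
      · subst ha; norm_num
      · rw [if_neg (by omega), if_neg (by omega)]

lemma countH2 (m : Multiset ℕ) : Multiset.count 0 (m.map (· + 1)) = 0 := by
  rw [Multiset.count_eq_zero]
  intro h
  obtain ⟨a, -, ha⟩ := Multiset.mem_map.mp h
  omega

lemma countH3 {m : Multiset ℕ} (hm : ∀ x ∈ m, x ≠ 1) :
    Multiset.count 0 (m.map (· - 1)) = Multiset.count 0 m := by
  induction m using Multiset.induction with
  | empty => simp
  | cons a m ih =>
      have ha1 : a ≠ 1 := hm a (Multiset.mem_cons_self a m)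
      rw [Multiset.map_cons, Multiset.count_cons, Multiset.count_cons,
        ih (fun x hx => hm x (Multiset.mem_cons_of_mem hx))]
      by_cases ha : a = 0
      · subst ha; norm_num
      · rw [if_neg (by omega), if_neg (by omega)]

lemma countH4 {m : Multiset ℕ} (hm : ∀ x ∈ m, x ≠ 0) :
    (m.map (· - 1)).map (· + 1) = m := by
  rw [Multiset.map_map]
  conv_rhs => rw [← Multiset.map_id m]
  refine Multiset.map_congr rfl fun x hx => ?_
  have := hm x hx
  simp; omega

lemma count_one_filter_ne (m : Multiset ℕ) :
    Multiset.count 1 (m.filter (· ≠ 1)) = 0 := by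
  rw [Multiset.count_filter]; simp

lemma count_zero_filter_ne (m : Multiset ℕ) :
    Multiset.count 0 (m.filter (· ≠ 1)) = Multiset.count 0 m := by
  rw [Multiset.count_filter, if_pos (by omega)]

lemma mem_filter_ne_one {m : Multiset ℕ} {x : ℕ} (h : x ∈ m.filter (· ≠ 1)) : x ≠ 1 :=
  (Multiset.mem_filter.mp h).2

lemma eq_singleton_of (m : Multiset ℕ) (h1 : Multiset.count 1 m = 1)
    (hf : m.filter (· ≠ 1) = 0) : m = {1} := by
  rw [filter_decomp m, h1, hf, add_zero]; rfl

lemma cons_filter_of_count_one {m : Multiset ℕ} (h1 : Multiset.count 1 m = 1) :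
    m = 1 ::ₘ m.filter (· ≠ 1) := by
  conv_lhs => rw [filter_decomp m]
  rw [h1, ← Multiset.singleton_add, Multiset.replicate_one]

lemma compo_first (w t' : GTree S ar)
    (h1 : Multiset.count 1 (epsIdx w) = 1)
    (h0 : Multiset.count 0 (epsIdx w) = 0) :
    compo w (t' :: ((Multiset.sort (epsIdx w) (· ≤ ·)).tail).map eps) =
      subst (fun x => if x = 1 then t' else eps x) w := by
  unfold compo
  refine subst_congr w fun x hx => ?_
  have hxl : ∀ y : ℕ, y ∈ epsIdx w ↔ y ∈ Multiset.sort (epsIdx w) (· ≤ ·) :=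
    fun y => (Multiset.mem_sort _).symm
  have hsorted : List.Pairwise (· ≤ ·) (Multiset.sort (epsIdx w) (· ≤ ·)) :=
    Multiset.pairwise_sort _ _
  have h1mem : (1 : ℕ) ∈ Multiset.sort (epsIdx w) (· ≤ ·) :=
    (hxl 1).mp (Multiset.count_pos.mp (by omega))
  obtain ⟨a, lt, hl⟩ : ∃ a lt, Multiset.sort (epsIdx w) (· ≤ ·) = a :: lt := by
    cases hcase : Multiset.sort (epsIdx w) (· ≤ ·) with
    | nil => rw [hcase] at h1mem; cases h1mem
    | cons a lt => exact ⟨a, lt, rfl⟩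
  have ha1 : a = 1 := by
    have hge : (1:ℕ) ≤ a := by
      have : a ∈ epsIdx w := (hxl a).mpr (hl ▸ List.mem_cons_self (a := a) (l := lt))
      have ha0 : a ≠ 0 := fun h => by
        rw [h] at this
        exact absurd (Multiset.count_pos.mpr this) (by omega)
      omega
    have hle : a ≤ 1 := by
      rw [hl] at h1mem hsorted
      rcases List.mem_cons.mp h1mem with h | h
      · omega
      · exact (List.pairwise_cons.mp hsorted).1 1 h
    omega
  subst ha1
  rw [hl]
  by_cases hx1 : x = 1
  · subst hx1
    rw [if_pos rfl, List.idxOf_cons_self]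
    rfl
  · rw [if_neg hx1]
    have hxmem : x ∈ (1 :: lt : List ℕ) := hl ▸ (hxl x).mp hx
    have hidx : List.idxOf x (1 :: lt) < (1 :: lt : List ℕ).length :=
      List.idxOf_lt_length_iff.mpr hxmem
    have hxlt : x ∈ lt := by
      rcases List.mem_cons.mp hxmem with h | h
      · omega
      · exact h
    have hlen : List.idxOf x lt < lt.length := List.idxOf_lt_length_iff.mpr hxlt
    have hi : List.idxOf x (1 :: lt) = List.idxOf x lt + 1 :=
      List.idxOf_cons_ne lt (by omega)
    rw [hi, List.tail_cons, List.getD_cons_succ]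
    have hilen : List.idxOf x lt < (lt.map (eps : ℕ → GTree S ar)).length := by
      rw [List.length_map]; exact hlen
    rw [List.getD_eq_getElem _ _ hilen, List.getElem_map]
    congr 1
    exact List.getElem_idxOf hlen

lemma mem_quotT {d t u : GTree S ar} :
    u ∈ quotT d t ↔
      epsIdx u = 1 ::ₘ (epsIdx t - epsIdx d).map (· + 1) ∧
      subst (fun j => if j = 1 then d else eps (j - 1)) u = t := Iff.rfl

lemma mem_quotL {d u : GTree S ar} {L' : Set (GTree S ar)} :
    u ∈ quotL d L' ↔ ∃ t ∈ L', u ∈ quotT d t := by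
  simp [quotL]

lemma mem_prodB {u : GTree S ar} {L₁ L₂ : Set (GTree S ar)} :
    u ∈ prodB L₁ b L₂ ↔ ∃ t ∈ L₁, u ∈ bsub b L₂ t := by
  simp [prodB]

lemma mem_pcompL {u : GTree S ar} {L₁ L₂ : Set (GTree S ar)} :
    u ∈ pcompL L₁ L₂ ↔ ∃ t ∈ L₁, u ∈ pcomp t L₂ := by
  simp [pcompL]

lemma bwd1 (hb : ar b = 0) (hL : ∀ u ∈ L, epsIdx u = 0) (hαb : α ≠ b) (t : GTree S ar) :
    prodB (quotT (symTree α) t) b L ⊆ quotL (symTree α) (bsub b L t) := by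
  intro u hu
  obtain ⟨v, hv, hu⟩ := mem_prodB.mp hu
  obtain ⟨hv1, hv2⟩ := mem_quotT.mp hv
  have hσ : ∀ x : ℕ, (if x = 1 then symTree α else eps (x - 1) : GTree S ar) ∈
      bsub b L (if x = 1 then symTree α else eps (x - 1)) := by
    intro x
    by_cases hx : x = 1
    · rw [if_pos hx]; exact mem_bsub_self hαb
    · rw [if_neg hx, bsub_eps]; exact Set.mem_singleton _
  have hs : subst (fun j => if j = 1 then symTree α else eps (j - 1)) u ∈ bsub b L t := by
    rw [← hv2]
    exact bsub_subst hL hσ v u hu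
  refine mem_quotL.mpr ⟨subst (fun j => if j = 1 then symTree α else eps (j - 1)) u, hs, mem_quotT.mpr ⟨?_, rfl⟩⟩
  have heq : epsIdx u = epsIdx v := epsIdx_bsub hb hL v u hu
  have hst : epsIdx (subst (fun j => if j = 1 then symTree α else eps (j - 1)) u) = epsIdx (subst (fun j => if j = 1 then symTree α else eps (j - 1)) v) := by
    rw [epsIdx_subst_tau, epsIdx_subst_tau, heq]
  rw [hst, hv2, heq]
  exact hv1

lemma fwd1 (hb : ar b = 0) (hL : ∀ u ∈ L, epsIdx u = 0) (hα : 1 ≤ ar α) (t : GTree S ar) :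
    quotL (symTree α) (bsub b L t) ⊆ prodB (quotT (symTree α) t) b L := by
  have hαb : α ≠ b := fun h => by rw [h, hb] at hα; omega
  intro u hu
  obtain ⟨s, hs, hmem⟩ := mem_quotL.mp hu
  obtain ⟨hu1, hu2⟩ := mem_quotT.mp hmem
  obtain ⟨v, hv1, hv2, hv3⟩ := lemC hb hL hαb t s u hs hu2 (Or.inl hα)
  refine mem_prodB.mpr ⟨v, mem_quotT.mpr ⟨?_, hv1⟩, hv2⟩
  rw [hv3, hu1, epsIdx_bsub hb hL t s hs]

lemma fwd2 (hb : ar b = 0) (hL : ∀ u ∈ L, epsIdx u = 0) (hα0 : ar α = 0) (hαb : α ≠ b)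
    (t : GTree S ar) :
    quotL (symTree α) (bsub b L t) ⊆
      prodB (quotT (symTree α) t) b L ∪
        pcompL (prodB (quotT (symTree b) t) b L) (quotL (symTree α) L) := by
  intro u hu
  obtain ⟨s, hs, hmem⟩ := mem_quotL.mp hu
  obtain ⟨hu1, hu2⟩ := mem_quotT.mp hmem
  have hAz : epsIdx (symTree (ar := ar) α) = 0 := epsIdx_symTree_zero hα0
  rw [hAz, Multiset.sub_zero] at hu1
  have hc0u : Multiset.count 0 (epsIdx u) = 0 := by
    rw [hu1, Multiset.count_cons_of_ne (by omega), countH2]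
  have hs_eq : epsIdx s = ((epsIdx u).filter (· ≠ 1)).map (· - 1) := by
    rw [← hu2, epsIdx_subst_tau, hAz, smul_zero, add_zero]
  have hc0s : Multiset.count 0 (epsIdx s) = 0 := by
    rw [hs_eq, countH3 (fun x hx => mem_filter_ne_one hx), count_zero_filter_ne]
    exact hc0u
  have hc1u : Multiset.count 1 (epsIdx u) = 1 := by
    rw [hu1, Multiset.count_cons_self, countH1, hc0s]
  rcases lemC2 hb hL hαb t s u hs hu2 hc1u with
    ⟨v, hv1, hv2, hv3⟩ | ⟨v, w, u', l, hq1, hq2, hq3, hq4, hq5, hq6, hq7, hq8⟩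
  · left
    refine mem_prodB.mpr ⟨v, mem_quotT.mpr ⟨?_, hv1⟩, hv2⟩
    rw [hAz, Multiset.sub_zero, hv3, hu1, epsIdx_bsub hb hL t s hs]
  · right
    have hc1u' : Multiset.count 1 (epsIdx u') = 1 := by
      have h := congrArg (Multiset.count 1) hq8
      rw [hc1u, Multiset.count_add, count_one_filter_ne] at h
      omega
    have hu'1 : epsIdx u' = {1} := by
      have hl0 : epsIdx l = 0 := hL l hq3
      have hmap0 : ((epsIdx u').filter (· ≠ 1)).map (· - 1) = 0 := by
        have h := congrArg epsIdx hq4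
        rw [epsIdx_subst_tau, hAz, smul_zero, add_zero] at h
        rw [h, hl0]
      have hfil : (epsIdx u').filter (· ≠ 1) = 0 := by
        have hcard := congrArg Multiset.card hmap0
        rw [Multiset.card_map, Multiset.card_zero] at hcard
        exact Multiset.card_eq_zero.mp hcard
      exact eq_singleton_of _ hc1u' hfil
    have hc0fv : Multiset.count 0 ((epsIdx v).filter (· ≠ 1)) = 0 := by
      have h := congrArg (Multiset.count 0) hq8
      rw [hc0u, Multiset.count_add] at h
      omega
    have ht_eq : epsIdx t = ((epsIdx v).filter (· ≠ 1)).map (· - 1) := by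
      rw [← hq1, epsIdx_subst_tau, epsIdx_symTree_zero hb, smul_zero, add_zero]
    have hvq : epsIdx v = 1 ::ₘ (epsIdx t - epsIdx (symTree (ar := ar) b)).map (· + 1) := by
      rw [epsIdx_symTree_zero hb, Multiset.sub_zero, ht_eq,
        countH4 (fun x hx hx0 =>
          absurd (Multiset.count_pos.mpr (hx0 ▸ hx)) (by rw [hc0fv]; omega))]
      exact cons_filter_of_count_one hq6
    refine mem_pcompL.mpr ⟨w, mem_prodB.mpr ⟨v, mem_quotT.mpr ⟨hvq, hq1⟩, hq2⟩, ?_⟩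
    refine ⟨u', mem_quotL.mpr ⟨l, hq3, mem_quotT.mpr ⟨?_, hq4⟩⟩, ?_⟩
    · rw [hL l hq3, hAz, Multiset.sub_zero, Multiset.map_zero, hu'1]
      rfl
    · rw [compo_first w u' (by rw [hq7]; exact hq6) (by
        rw [hq7, filter_decomp (epsIdx v), Multiset.count_add, hc0fv,
          Multiset.count_replicate]
        simp)]
      exact hq5

lemma bwd2 (hb : ar b = 0) (hL : ∀ u ∈ L, epsIdx u = 0) (hα0 : ar α = 0) (hαb : α ≠ b)
    (t : GTree S ar) :
    pcompL (prodB (quotT (symTree b) t) b L) (quotL (symTree α) L) ⊆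
      quotL (symTree α) (bsub b L t) := by
  intro u hu
  obtain ⟨w, hwX, hupc⟩ := mem_pcompL.mp hu
  obtain ⟨t', ht'Y, hcompo⟩ := hupc
  obtain ⟨v, hvq, hw⟩ := mem_prodB.mp hwX
  obtain ⟨hv1, hv2⟩ := mem_quotT.mp hvq
  obtain ⟨l, hl, ht'q⟩ := mem_quotL.mp ht'Y
  obtain ⟨ht'1, ht'2⟩ := mem_quotT.mp ht'q
  have hAz : epsIdx (symTree (ar := ar) α) = 0 := epsIdx_symTree_zero hα0
  have hBz : epsIdx (symTree (ar := ar) b) = 0 := epsIdx_symTree_zero hb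
  rw [hBz, Multiset.sub_zero] at hv1
  have ht_eq : epsIdx t = ((epsIdx v).filter (· ≠ 1)).map (· - 1) := by
    rw [← hv2, epsIdx_subst_tau, hBz, smul_zero, add_zero]
  have hc0v : Multiset.count 0 (epsIdx v) = 0 := by
    rw [hv1, Multiset.count_cons_of_ne (by omega), countH2]
  have hc0t : Multiset.count 0 (epsIdx t) = 0 := by
    rw [ht_eq, countH3 (fun x hx => mem_filter_ne_one hx), count_zero_filter_ne]
    exact hc0v
  have hc1v : Multiset.count 1 (epsIdx v) = 1 := by
    rw [hv1, Multiset.count_cons_self, countH1, hc0t]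
  have hwv : epsIdx w = epsIdx v := epsIdx_bsub hb hL v w hw
  have hl0 : epsIdx l = 0 := hL l hl
  have ht'eps : epsIdx t' = {1} := by
    rw [ht'1, hl0, hAz, Multiset.sub_zero, Multiset.map_zero]
    rfl
  have hcmp : u = subst (fun x => if x = 1 then t' else eps x) w := by
    rw [compo_first w t' (by rw [hwv]; exact hc1v) (by rw [hwv]; exact hc0v)] at hcompo
    exact hcompo
  have hsubst : subst (fun j => if j = 1 then symTree α else eps (j - 1)) u = subst (fun x => if x = 1 then l else eps (x - 1)) w := by
    rw [hcmp, subst_subst]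
    congr 1
    funext x
    by_cases hx : x = 1
    · rw [if_pos hx, if_pos hx]
      exact ht'2
    · rw [if_neg hx, if_neg hx]
      show (if x = 1 then symTree α else eps (x - 1)) = eps (x - 1)
      rw [if_neg hx]
  have hsb : subst (fun x => if x = 1 then l else eps (x - 1)) w ∈ bsub b L t := by
    rw [← hv2]
    refine bsub_subst hL ?_ v w hw
    intro x
    by_cases hx : x = 1
    · rw [if_pos hx, if_pos hx, symTree, bsub_node_b rfl]
      exact hl
    · rw [if_neg hx, if_neg hx, bsub_eps]
      exact Set.mem_singleton _
  refine mem_quotL.mpr ⟨subst (fun j => if j = 1 then symTree α else eps (j - 1)) u, by rw [hsubst]; exact hsb, mem_quotT.mpr ⟨?_, rfl⟩⟩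
  have hseq : epsIdx (subst (fun j => if j = 1 then symTree α else eps (j - 1)) u) = epsIdx t := by
    rw [hsubst]
    exact epsIdx_bsub hb hL t _ hsb
  rw [hseq, hAz, Multiset.sub_zero, ht_eq,
    countH4 (fun x hx hx0 => by
      have : (0:ℕ) ∈ (epsIdx v).filter (· ≠ 1) := hx0 ▸ hx
      have hcf : Multiset.count 0 ((epsIdx v).filter (· ≠ 1)) = 0 := by
        rw [count_zero_filter_ne]; exact hc0v
      exact absurd (Multiset.count_pos.mpr this) (by rw [hcf]; omega))]
  rw [hcmp, epsIdx_subst_sigma, hwv, hc1v, ht'eps, one_nsmul, ← Multiset.singleton_add,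
    add_comm, Multiset.singleton_add]

end Quot

end GTree


open GTree in
/-- `α⁻¹(t ·_b L)` for `α` of arity ≥ 1, and for `α ∈ Σ₀ ∖ {b}`. -/
theorem quotient_alpha_of_bprod {S : Type} {ar : S → ℕ} [DecidableEq S] (α b : S)
    (hb : ar b = 0) (t : GTree S ar) (L : Set (GTree S ar))
    (hL : ∀ u ∈ L, epsIdx u = 0) :
    (1 ≤ ar α →
      quotL (symTree α) (bsub b L t) = prodB (quotT (symTree α) t) b L) ∧
    (ar α = 0 → α ≠ b →
      quotL (symTree α) (bsub b L t) =
        prodB (quotT (symTree α) t) b L ∪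
          pcompL (prodB (quotT (symTree b) t) b L) (quotL (symTree α) L)) := by
  constructor
  · intro hα
    have hαb : α ≠ b := fun h => by rw [h, hb] at hα; omega
    exact Set.Subset.antisymm (fwd1 hb hL hα t) (bwd1 hb hL hαb t)
  · intro hα0 hαb
    refine Set.Subset.antisymm (fwd2 hb hL hα0 hαb t) ?_
    intro u hu
    rcases hu with hu | hu
    · exact bwd1 hb hL hαb t hu
    · exact bwd2 hb hL hα0 hαb t hu
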